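/- Let E be a Hilbert space and let T ∈ B(F²(Hₙ) ⊗ E) be a positive multi-Toeplitz operator. Then there exist isometries V_1,…,V_n with pairwise orthogonal ranges on the closure Y of T^{1/2}(F²(Hₙ) ⊗ E) such that V_i T^{1/2} = T^{1/2}(S_i ⊗ I_E) for i = 1,…,n. -/

import Mathlib

open scoped InnerProductSpace

/-- Let `S_1,…,S_n` be isometries with orthogonal ranges (modelling the
creation operators `S_i ⊗ I_E` on `F²(Hₙ) ⊗ E`) and let `T ≥ 0` be a multi-Toeplitz
operator (`(S_i ⊗ I)* T (S_j ⊗ I) = δ_{ij} T`).  Then, with `R := T^{1/2}` (the positive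
square root), there exist isometries `V_1,…,V_n` with pairwise orthogonal ranges on the
closure `Y` of the range of `T^{1/2}` satisfying `V_i T^{1/2} = T^{1/2} (S_i ⊗ I)`. -/
theorem stmt_7 {F : Type*} [NormedAddCommGroup F] [InnerProductSpace ℂ F] [CompleteSpace F]
    {n : ℕ} (S : Fin n → F →L[ℂ] F)
    (hSiso : ∀ i (x : F), ‖S i x‖ = ‖x‖)
    (hSorth : ∀ i j, i ≠ j → ContinuousLinearMap.adjoint (S i) ∘L S j = 0)
    (T R : F →L[ℂ] F) (hTpos : T.IsPositive) (hRpos : R.IsPositive) (hRsq : R ∘L R = T)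
    (hT : ∀ i j, ContinuousLinearMap.adjoint (S i) ∘L T ∘L S j
        = if i = j then T else 0) :
    ∃ V : Fin n →
        ((LinearMap.range (R : F →ₗ[ℂ] F)).topologicalClosure →L[ℂ] (LinearMap.range (R : F →ₗ[ℂ] F)).topologicalClosure),
      (∀ i y, ‖V i y‖ = ‖y‖) ∧
      (∀ i j, i ≠ j → ∀ x y, ⟪V i x, V j y⟫_ℂ = (0 : ℂ)) ∧
      (∀ i (x : F),
        ((V i ⟨R x, Submodule.le_topologicalClosure _ (LinearMap.mem_range_self (R : F →ₗ[ℂ] F) x)⟩ :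
            (LinearMap.range (R : F →ₗ[ℂ] F)).topologicalClosure) : F) = R (S i x)) := by
  classical
  set M := LinearMap.range (R : F →ₗ[ℂ] F) with hM
  set Y := M.topologicalClosure with hY
  have hRsa : ContinuousLinearMap.adjoint R = R := hRpos.isSelfAdjoint
  have hRR : ∀ a b : F, ⟪R a, R b⟫_ℂ = ⟪a, T b⟫_ℂ := by
    intro a b
    rw [← hRsa, ContinuousLinearMap.adjoint_inner_left, hRsa, ← ContinuousLinearMap.comp_apply,
      hRsq]
  have hkey : ∀ i j (x y : F),
      ⟪R (S i x), R (S j y)⟫_ℂ = if i = j then ⟪R x, R y⟫_ℂ else 0 := by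
    intro i j x y
    rw [hRR, ← ContinuousLinearMap.adjoint_inner_right (S i)]
    have h1 : ContinuousLinearMap.adjoint (S i) (T (S j y))
        = (ContinuousLinearMap.adjoint (S i) ∘L T ∘L S j) y := rfl
    rw [h1, hT i j]
    split_ifs with hij
    · rw [hRR]
    · simp
  have hnorm : ∀ i (x : F), ‖R (S i x)‖ = ‖R x‖ := by
    intro i x
    have h := hkey i i x x
    rw [if_pos rfl] at h
    rw [inner_self_eq_norm_sq_to_K, inner_self_eq_norm_sq_to_K] at h
    have h2 : ‖R (S i x)‖ ^ 2 = ‖R x‖ ^ 2 := by exact_mod_cast h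
    nlinarith [norm_nonneg (R (S i x)), norm_nonneg (R x)]
  have hKcong : ∀ i (x x' : F), R x = R x' → R (S i x) = R (S i x') := by
    intro i x x' hxx
    have h0 : ‖R (S i x) - R (S i x')‖ = 0 := by
      rw [← map_sub, ← map_sub, hnorm, map_sub, hxx, sub_self, norm_zero]
    rwa [norm_eq_zero, sub_eq_zero] at h0
  have hmemY : ∀ z : F, R z ∈ Y :=
    fun z => Submodule.le_topologicalClosure _ (LinearMap.mem_range_self (R : F →ₗ[ℂ] F) z)
  -- a choice of preimage for each element of M
  let c : M → F := fun m => (LinearMap.mem_range.mp m.2).choose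
  have hc : ∀ m : M, R (c m) = (m : F) := fun m => (LinearMap.mem_range.mp m.2).choose_spec
  -- the inclusion e : M →L Y
  let eiso : M →ₗᵢ[ℂ] Y :=
    { toLinearMap :=
        { toFun := fun m => ⟨(m : F), Submodule.le_topologicalClosure _ m.2⟩
          map_add' := fun a b => rfl
          map_smul' := fun d a => rfl }
      norm_map' := fun m => rfl }
  let e : M →L[ℂ] Y := eiso.toContinuousLinearMap
  have h_e : IsUniformInducing e := eiso.isometry.isUniformInducing
  have h_dense : DenseRange e := by
    intro y
    rw [closure_subtype]
    have himg : Subtype.val '' Set.range e = (M : Set F) := by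
      ext v
      constructor
      · rintro ⟨w, ⟨m, rfl⟩, rfl⟩; exact m.2
      · intro hv; exact ⟨e ⟨v, hv⟩, ⟨⟨v, hv⟩, rfl⟩, rfl⟩
    rw [himg]
    exact y.2
  -- the isometries L i : M →L Y
  let Liso : Fin n → (M →ₗᵢ[ℂ] Y) := fun i =>
    { toLinearMap :=
        { toFun := fun m => ⟨R (S i (c m)), hmemY _⟩
          map_add' := by
            intro a b
            apply Subtype.ext
            have h1 : R (c (a + b)) = R (c a + c b) := by
              rw [hc, map_add, hc, hc]; rfl
            show R (S i (c (a + b))) = (⟨R (S i (c a)), hmemY _⟩ + ⟨R (S i (c b)), hmemY _⟩ : Y).1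
            rw [hKcong i _ _ h1, map_add, map_add]
            rfl
          map_smul' := by
            intro d a
            apply Subtype.ext
            have h1 : R (c (d • a)) = R (d • c a) := by
              rw [hc, map_smul, hc]; rfl
            show R (S i (c (d • a))) = (d • (⟨R (S i (c a)), hmemY _⟩ : Y)).1
            rw [hKcong i _ _ h1, map_smul, map_smul]
            rfl }
      norm_map' := by
        intro m
        show ‖R (S i (c m))‖ = ‖(m : F)‖
        rw [hnorm, hc] }
  let L : Fin n → (M →L[ℂ] Y) := fun i => (Liso i).toContinuousLinearMap
  let V : Fin n → (Y →L[ℂ] Y) := fun i => (L i).extend e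
  have hVe : ∀ i m, V i (e m) = L i m := fun i m =>
    ContinuousLinearMap.extend_eq (L i) h_dense h_e m
  refine ⟨V, ?_, ?_, ?_⟩
  · intro i y
    refine h_dense.induction_on y ?_ ?_
    · exact isClosed_eq ((V i).continuous.norm) continuous_norm
    · intro m
      rw [hVe]
      exact (Liso i).norm_map m
  · intro i j hij x y
    refine DenseRange.induction_on₂ h_dense ?_ ?_ x y
    · exact isClosed_eq (Continuous.inner ((V i).continuous.comp continuous_fst)
        ((V j).continuous.comp continuous_snd)) continuous_const
    · intro a b
      rw [hVe, hVe]
      show ⟪(R (S i (c a)) : F), (R (S j (c b)) : F)⟫_ℂ = 0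
      rw [hkey i j, if_neg hij]
  · intro i x
    have hm : R x ∈ M := LinearMap.mem_range_self (R : F →ₗ[ℂ] F) x
    have : (⟨R x, Submodule.le_topologicalClosure _ (LinearMap.mem_range_self (R : F →ₗ[ℂ] F) x)⟩ : Y)
        = e ⟨R x, hm⟩ := rfl
    rw [this, hVe]
    show R (S i (c ⟨R x, hm⟩)) = R (S i x)
    exact hKcong i _ _ (by rw [hc])
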